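/- The group Γ⁺ is perfect: its commutator subgroup equals the whole group, equivalently its abelianization is the trivial group. -/

import Mathlib

/-- The three generators `a`, `b`, `c` of the tetrahedral group `Γ⁺`. -/
inductive Gen : Type
  | a | b | c

open FreeGroup in
/-- The relations `a² = b² = c⁵ = (bc)² = (ca)³ = (ab)⁵ = 1` of `Γ⁺`. -/
def rels : Set (FreeGroup Gen) :=
  {of Gen.a ^ 2, of Gen.b ^ 2, of Gen.c ^ 5,
    (of Gen.b * of Gen.c) ^ 2, (of Gen.c * of Gen.a) ^ 3, (of Gen.a * of Gen.b) ^ 5}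

/-- `Γ⁺ = ⟨a, b, c | a² = b² = c⁵ = (bc)² = (ca)³ = (ab)⁵ = 1⟩`. -/
abbrev GammaPlus := PresentedGroup rels

/-- Each relator maps to `1` in `Γ⁺`. -/
lemma rel_one {r : FreeGroup Gen} (hr : r ∈ rels) :
    (QuotientGroup.mk r : GammaPlus) = 1 :=
  (QuotientGroup.eq_one_iff r).mpr (Subgroup.subset_normalClosure hr)

/-- The canonical map from the free group to the abelianization of `Γ⁺`. -/
noncomputable def fhom : FreeGroup Gen →* Abelianization GammaPlus :=
  Abelianization.of.comp (QuotientGroup.mk' _)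

lemma fhom_rel {r : FreeGroup Gen} (hr : r ∈ rels) : fhom r = 1 := by
  have : fhom r = Abelianization.of (QuotientGroup.mk r : GammaPlus) := rfl
  rw [this, rel_one hr, map_one]; rfl

lemma fhom_surj : Function.Surjective fhom := fun x => by
  induction x using Quotient.inductionOn with
  | h g =>
    induction g using Quotient.inductionOn with
    | h f => exact ⟨f, rfl⟩

lemma fhom_gens_one : ∀ x : Gen, fhom (FreeGroup.of x) = 1 := by
  have ra : fhom (FreeGroup.of Gen.a) ^ 2 = 1 := by
    rw [← map_pow]; exact fhom_rel (by left; rfl)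
  have rb : fhom (FreeGroup.of Gen.b) ^ 2 = 1 := by
    rw [← map_pow]; exact fhom_rel (by right; left; rfl)
  have rc : fhom (FreeGroup.of Gen.c) ^ 5 = 1 := by
    rw [← map_pow]; exact fhom_rel (by right; right; left; rfl)
  have rbc : (fhom (FreeGroup.of Gen.b) * fhom (FreeGroup.of Gen.c)) ^ 2 = 1 := by
    rw [← map_mul, ← map_pow]; exact fhom_rel (by right; right; right; left; rfl)
  have rca : (fhom (FreeGroup.of Gen.c) * fhom (FreeGroup.of Gen.a)) ^ 3 = 1 := by
    rw [← map_mul, ← map_pow]; exact fhom_rel (by right; right; right; right; left; rfl)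
  have rab : (fhom (FreeGroup.of Gen.a) * fhom (FreeGroup.of Gen.b)) ^ 5 = 1 := by
    rw [← map_mul, ← map_pow]; exact fhom_rel (by right; right; right; right; right; rfl)
  set α := fhom (FreeGroup.of Gen.a)
  set β := fhom (FreeGroup.of Gen.b)
  set γ := fhom (FreeGroup.of Gen.c)
  rw [mul_pow, rb, one_mul] at rbc
  have hc : γ = 1 := by
    have : γ = γ ^ 5 * ((γ ^ 2) ^ 2)⁻¹ := by group
    rw [this, rc, rbc, one_pow, inv_one, mul_one]
  rw [mul_pow, hc, one_pow, one_mul] at rca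
  have ha : α = 1 := by
    have : α = α ^ 3 * (α ^ 2)⁻¹ := by group
    rw [this, rca, ra, inv_one, mul_one]
  rw [mul_pow, ha, one_pow, one_mul] at rab
  have hb : β = 1 := by
    have : β = β ^ 5 * ((β ^ 2) ^ 2)⁻¹ := by group
    rw [this, rab, rb, one_pow, inv_one, mul_one]
  intro x; cases x <;> assumption

/-- `Γ⁺` is a perfect group: its commutator subgroup is everything,
equivalently its abelianization is trivial. -/
theorem gammaPlus_commutator_eq_top :
    commutator GammaPlus = ⊤ ∧ Subsingleton (Abelianization GammaPlus) := by
  have htriv : ∀ y : Abelianization GammaPlus, y = 1 := by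
    intro y
    obtain ⟨f, rfl⟩ := fhom_surj y
    induction f using FreeGroup.induction_on with
    | C1 => exact map_one _
    | of x => exact fhom_gens_one x
    | inv_of x h => rw [map_inv, h, inv_one]
    | mul x y hx hy => rw [map_mul, hx, hy, one_mul]
  have hsub : Subsingleton (Abelianization GammaPlus) :=
    ⟨fun x y => (htriv x).trans (htriv y).symm⟩
  refine ⟨?_, hsub⟩
  ext g
  simp only [Subgroup.mem_top, iff_true]
  have : (Abelianization.of g : Abelianization GammaPlus) = 1 := htriv _
  exact (QuotientGroup.eq_one_iff g).mp this
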